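/- Let G be a graph on vertex set partitioned into color classes V_1,...,V_k each of size n (no edge inside a class), with edge set e_1,...,e_m. Construct the Consensus Patterns instance consisting of N = m(k+2)+1 copies of each string 𝒱_i (i < n) and one copy of each edge string ℰ_j, with target length k+1, as in the reduction. Then the minimum over all strings S of length k+1 and all valid alignments of the total Hamming distance is at most N·(n−1)·k + m·k − k(k−1)/2 if and only if G contains a multicolored clique of size k (one vertex from each color class, pairwise adjacent). -/

import Mathlib

/-- Hamming distance between two strings of length `n`. -/
def ham {n : ℕ} {α : Type*} [DecidableEq α] (S T : Fin n → α) : ℕ :=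
  (Finset.univ.filter fun i => S i ≠ T i).card

/-- The vertex string `𝒱_i = $ v_{1,i} … v_{k,i}`. -/
def Vstr {k n : ℕ} {α : Type*} (dollar : α) (v : Fin k → Fin n → α) (i : Fin n) :
    Fin (k+1) → α := Fin.cons dollar fun h => v h i

/-- The edge string `ℰ`. -/
def Estr {k n : ℕ} {α : Type*} (dollar circ : α) (v : Fin k → Fin n → α)
    (hs ht : Fin k) (js jt : Fin n) : Fin (k+2) → α := fun q =>
  if q.val = 0 then dollar
  else if q.val = hs.val + 2 then v hs js
  else if q.val = ht.val + 2 then v ht jt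
  else circ

/-- The length-`L` window of a length-`(L+1)` string at offset `p ∈ {0,1}`. -/
def window {L : ℕ} {α : Type*} (T : Fin (L+1) → α) (p : Fin 2) : Fin L → α :=
  fun i => T ⟨p.val + i.val, by have := p.2; have := i.2; omega⟩

lemma ham_eq_sum {N : ℕ} {α : Type*} [DecidableEq α] (S T : Fin N → α) :
    ham S T = ∑ q, if S q = T q then 0 else 1 := by
  unfold ham
  rw [Finset.card_filter]
  exact Finset.sum_congr rfl fun q _ => by by_cases h : S q = T q <;> simp [h]

lemma sum_ite_card {β : Type*} [Fintype β] (P : β → Prop) [DecidablePred P] :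
    ∑ x, (if P x then 0 else 1) = Fintype.card β - (Finset.univ.filter P).card := by
  have h1 : ∑ x, (if P x then 0 else 1) = (Finset.univ.filter fun x => ¬ P x).card := by
    rw [Finset.card_filter]
    exact Finset.sum_congr rfl fun q _ => by by_cases h : P q <;> simp [h]
  have h2 := Finset.card_filter_add_card_filter_not (s := (Finset.univ : Finset β)) P
  rw [h1]
  simp only [Finset.card_univ] at h2 ⊢
  omega

lemma Pset_card (k : ℕ) :
    ((Finset.univ : Finset (Fin k × Fin k)).filter fun p => p.1 < p.2).card = k * (k-1) / 2 := by
  rw [Finset.card_eq_sum_card_fiberwise (f := Prod.snd) (t := Finset.univ) (by simp)]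
  have h1 : ∀ y : Fin k,
      ((((Finset.univ : Finset (Fin k × Fin k)).filter fun p => p.1 < p.2).filter
        fun p => p.2 = y)).card = y.val := by
    intro y
    have : (((Finset.univ : Finset (Fin k × Fin k)).filter fun p => p.1 < p.2).filter
        fun p => p.2 = y) = (Finset.Iio y).map ⟨fun x => (x, y), fun a b h => by
          simpa using congrArg Prod.fst h⟩ := by
      ext ⟨a, b⟩
      simp only [Finset.mem_filter, Finset.mem_univ, true_and, Finset.mem_map,
        Finset.mem_Iio, Function.Embedding.coeFn_mk, Prod.mk.injEq]
      constructor
      · rintro ⟨h1, rfl⟩; exact ⟨a, h1, rfl⟩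
      · rintro ⟨x, hx, he⟩
        have he' : (x, y) = (a, b) := he
        obtain ⟨rfl, rfl⟩ := Prod.mk.inj he'
        exact ⟨hx, rfl⟩
    rw [this, Finset.card_map, Fin.card_Iio]
  rw [Finset.sum_congr rfl fun y _ => h1 y]
  rw [Fin.sum_univ_eq_sum_range (fun i => i) k]
  exact Finset.sum_range_id k

section main
variable {k n : ℕ} {α : Type*} [DecidableEq α]
  (dollar circ : α) (v : Fin k → Fin n → α)

def Scan (idx : Fin k → Fin n) : Fin (k+1) → α := Fin.cons dollar fun h => v h (idx h)

variable {dollar circ v}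
variable (hv : Function.Injective fun q : Fin k × Fin n => v q.1 q.2)
  (hvd : ∀ h i, v h i ≠ dollar) (hvc : ∀ h i, v h i ≠ circ) (hdc : dollar ≠ circ)

omit [DecidableEq α] in
include hv in
lemma veq {h h' : Fin k} {i i' : Fin n} (e : v h i = v h' i') : h = h' ∧ i = i' := by
  have := hv (a₁ := (h, i)) (a₂ := (h', i')) e
  exact ⟨congrArg Prod.fst this, congrArg Prod.snd this⟩

include hv in
lemma sum_ham_Scan (idx : Fin k → Fin n) :
    ∑ i, ham (Scan dollar v idx) (Vstr dollar v i) = k * (n-1) := by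
  have hham : ∀ i, ham (Scan dollar v idx) (Vstr dollar v i)
      = ∑ h : Fin k, if idx h = i then 0 else 1 := by
    intro i
    rw [ham_eq_sum, Fin.sum_univ_succ]
    simp only [Scan, Vstr, Fin.cons_zero, Fin.cons_succ, eq_self_iff_true, if_true,
      Nat.zero_add, zero_add]
    apply Finset.sum_congr rfl
    intro h _
    by_cases e : idx h = i
    · simp [e]
    · rw [if_neg e, if_neg (fun heq => e (veq hv heq).2)]
  rw [Finset.sum_congr rfl fun i _ => hham i, Finset.sum_comm]
  have : ∀ h : Fin k, ∑ i : Fin n, (if idx h = i then 0 else 1) = n - 1 := by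
    intro h
    rw [sum_ite_card]
    simp [Finset.filter_eq, Fintype.card_fin]
  rw [Finset.sum_congr rfl fun h _ => this h]
  simp [Finset.sum_const, Finset.card_univ, mul_comm]

omit [DecidableEq α] in
lemma window_Estr_zero_succ (hs ht : Fin k) (js jt : Fin n) (h : Fin k) :
    window (Estr dollar circ v hs ht js jt) 0 h.succ
      = if h.val = hs.val + 1 then v hs js
        else if h.val = ht.val + 1 then v ht jt else circ := by
  simp only [window, Estr, Fin.val_succ, Fin.val_zero]
  split_ifs <;> first | rfl | omega | contradiction

omit [DecidableEq α] in
lemma window_Estr_zero_zero (hs ht : Fin k) (js jt : Fin n) :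
    window (Estr dollar circ v hs ht js jt) 0 0 = dollar := by
  simp only [window, Estr, Fin.val_zero]
  split_ifs <;> first | rfl | omega

omit [DecidableEq α] in
lemma window_Estr_one_zero (hs ht : Fin k) (js jt : Fin n) :
    window (Estr dollar circ v hs ht js jt) 1 0 = circ := by
  simp only [window, Estr, Fin.val_zero, Fin.val_one]
  split_ifs <;> first | rfl | omega

omit [DecidableEq α] in
lemma window_Estr_one_succ (hs ht : Fin k) (js jt : Fin n) (h : Fin k) :
    window (Estr dollar circ v hs ht js jt) 1 h.succ
      = if h = hs then v hs js else if h = ht then v ht jt else circ := by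
  simp only [window, Estr, Fin.val_succ, Fin.val_one, Fin.ext_iff]
  split_ifs <;> first | rfl | omega | contradiction

include hv hvd hvc in
lemma ham_edge_p0 (idx : Fin k → Fin n) (hs ht : Fin k) (js jt : Fin n) :
    ham (Scan dollar v idx) (window (Estr dollar circ v hs ht js jt) 0) = k := by
  rw [ham_eq_sum, Fin.sum_univ_succ]
  have h0 : (if Scan dollar v idx 0 = window (Estr dollar circ v hs ht js jt) 0 0
      then (0:ℕ) else 1) = 0 := by
    rw [window_Estr_zero_zero]
    simp [Scan]
  have h1 : ∀ h : Fin k,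
      (if Scan dollar v idx h.succ = window (Estr dollar circ v hs ht js jt) 0 h.succ
        then (0:ℕ) else 1) = 1 := by
    intro h
    rw [window_Estr_zero_succ]
    simp only [Scan, Fin.cons_succ]
    rw [if_neg]
    intro heq
    split_ifs at heq with e1 e2
    · have := congrArg Fin.val (veq hv heq).1; omega
    · have := congrArg Fin.val (veq hv heq).1; omega
    · exact hvc _ _ heq
  rw [h0, Finset.sum_congr rfl fun h _ => h1 h]
  simp

include hv hvc hdc in
lemma ham_edge_p1 (idx : Fin k → Fin n) (hs ht : Fin k) (js jt : Fin n) (hne : hs ≠ ht) :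
    ham (Scan dollar v idx) (window (Estr dollar circ v hs ht js jt) 1)
      = 1 + (k - ((Finset.univ.filter fun h : Fin k =>
            (h = hs ∧ js = idx hs) ∨ (h = ht ∧ jt = idx ht)).card)) := by
  rw [ham_eq_sum, Fin.sum_univ_succ]
  have h0 : (if Scan dollar v idx 0 = window (Estr dollar circ v hs ht js jt) 1 0
      then (0:ℕ) else 1) = 1 := by
    rw [window_Estr_one_zero]
    simp [Scan, hdc]
  have h1 : ∀ h : Fin k,
      (if Scan dollar v idx h.succ = window (Estr dollar circ v hs ht js jt) 1 h.succ
        then (0:ℕ) else 1)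
      = if (h = hs ∧ js = idx hs) ∨ (h = ht ∧ jt = idx ht) then 0 else 1 := by
    intro h
    rw [window_Estr_one_succ]
    simp only [Scan, Fin.cons_succ]
    by_cases e1 : h = hs
    · subst e1
      rw [if_pos rfl]
      by_cases e2 : js = idx h
      · rw [if_pos (by rw [e2]), if_pos (Or.inl ⟨rfl, e2⟩)]
      · rw [if_neg (fun heq => e2 ((veq hv heq).2.symm)), if_neg]
        rintro (⟨-, e⟩ | ⟨e, -⟩)
        · exact e2 e
        · exact hne e
    · rw [if_neg e1]
      by_cases e3 : h = ht
      · subst e3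
        rw [if_pos rfl]
        by_cases e4 : jt = idx h
        · rw [if_pos (by rw [e4]), if_pos (Or.inr ⟨rfl, e4⟩)]
        · rw [if_neg (fun heq => e4 ((veq hv heq).2.symm)), if_neg]
          rintro (⟨e, -⟩ | ⟨-, e⟩)
          · exact e1 e
          · exact e4 e
      · rw [if_neg e3, if_neg (hvc h (idx h)), if_neg]
        rintro (⟨e, -⟩ | ⟨e, -⟩)
        · exact e1 e
        · exact e3 e
  rw [h0, Finset.sum_congr rfl fun h _ => h1 h, sum_ite_card]
  simp [Fintype.card_fin]

include hv hvd hvc hdc in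
lemma edge_lower (hk : 2 ≤ k) (idx : Fin k → Fin n) (hs ht : Fin k) (js jt : Fin n)
    (hne : hs ≠ ht) (p : Fin 2) :
    k ≤ ham (Scan dollar v idx) (window (Estr dollar circ v hs ht js jt) p)
        + (if js = idx hs ∧ jt = idx ht then 1 else 0) := by
  have hp : p = 0 ∨ p = 1 := by
    rcases p with ⟨pv, hpv⟩
    interval_cases pv
    · exact Or.inl rfl
    · exact Or.inr rfl
  rcases hp with rfl | rfl
  · rw [ham_edge_p0 hv hvd hvc idx hs ht js jt]
    exact Nat.le_add_right _ _
  · rw [ham_edge_p1 hv hvc hdc idx hs ht js jt hne]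
    set c := ((Finset.univ.filter fun h : Fin k =>
        (h = hs ∧ js = idx hs) ∨ (h = ht ∧ jt = idx ht)).card) with hc
    by_cases hmm : js = idx hs ∧ jt = idx ht
    · have hc2 : c ≤ 2 := by
        have hsub : (Finset.univ.filter fun h : Fin k =>
            (h = hs ∧ js = idx hs) ∨ (h = ht ∧ jt = idx ht)) ⊆ {hs, ht} := by
          intro x hx
          simp only [Finset.mem_filter] at hx
          rcases hx.2 with ⟨e, -⟩ | ⟨e, -⟩ <;> simp [e]
        calc c ≤ ({hs, ht} : Finset (Fin k)).card := Finset.card_le_card hsub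
        _ ≤ 2 := (Finset.card_insert_le _ _).trans (by simp)
      rw [if_pos hmm]
      omega
    · rw [if_neg hmm]
      have hc1 : c ≤ 1 := by
        by_cases hA : js = idx hs
        · have hB : ¬ jt = idx ht := fun hB => hmm ⟨hA, hB⟩
          have hsub : (Finset.univ.filter fun h : Fin k =>
              (h = hs ∧ js = idx hs) ∨ (h = ht ∧ jt = idx ht)) ⊆ {hs} := by
            intro x hx
            simp only [Finset.mem_filter] at hx
            rcases hx.2 with ⟨e, -⟩ | ⟨-, e⟩
            · simp [e]
            · exact absurd e hB
          exact (Finset.card_le_card hsub).trans (by simp)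
        · have hsub : (Finset.univ.filter fun h : Fin k =>
              (h = hs ∧ js = idx hs) ∨ (h = ht ∧ jt = idx ht)) ⊆ {ht} := by
            intro x hx
            simp only [Finset.mem_filter] at hx
            rcases hx.2 with ⟨-, e⟩ | ⟨e, -⟩
            · exact absurd e hA
            · simp [e]
          exact (Finset.card_le_card hsub).trans (by simp)
      omega

include hv hvc hdc in
lemma edge_upper_matching (hk : 2 ≤ k) (idx : Fin k → Fin n) (hs ht : Fin k) (js jt : Fin n)
    (hne : hs ≠ ht) (hmm : js = idx hs ∧ jt = idx ht) :
    ham (Scan dollar v idx) (window (Estr dollar circ v hs ht js jt) 1) + 1 ≤ k := by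
  rw [ham_edge_p1 hv hvc hdc idx hs ht js jt hne]
  have : (Finset.univ.filter fun h : Fin k =>
      (h = hs ∧ js = idx hs) ∨ (h = ht ∧ jt = idx ht)) = {hs, ht} := by
    ext x
    simp [hmm.1, hmm.2]
  rw [this, Finset.card_insert_of_notMem (by simp [hne]), Finset.card_singleton]
  omega

include hv in
lemma vertex_structure (hn : 2 ≤ n) (S : Fin (k+1) → α)
    (hA : ∑ i, ham S (Vstr dollar v i) ≤ k * (n-1)) :
    ∃ idx : Fin k → Fin n, S = Scan dollar v idx := by
  have h1 : ∀ i, ham S (Vstr dollar v i)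
      = (if S 0 = dollar then 0 else 1)
        + ∑ h : Fin k, (if S h.succ = v h i then 0 else 1) := by
    intro i
    rw [ham_eq_sum, Fin.sum_univ_succ]
    simp only [Vstr, Fin.cons_zero, Fin.cons_succ]
  simp only [h1] at hA
  rw [Finset.sum_add_distrib, Finset.sum_comm] at hA
  have hterm : ∀ h : Fin k, ∑ i : Fin n, (if S h.succ = v h i then 0 else 1)
      = n - (Finset.univ.filter fun i => S h.succ = v h i).card := by
    intro h
    rw [sum_ite_card]
    simp [Fintype.card_fin]
  have hcard_le : ∀ h : Fin k, (Finset.univ.filter fun i => S h.succ = v h i).card ≤ 1 := by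
    intro h
    rw [Finset.card_le_one]
    intro a ha b hb
    simp only [Finset.mem_filter, Finset.mem_univ, true_and] at ha hb
    exact (veq hv (ha.symm.trans hb)).2
  simp only [hterm] at hA
  have hge : ∀ h ∈ (Finset.univ : Finset (Fin k)), (n - 1 : ℕ)
      ≤ n - (Finset.univ.filter fun i => S h.succ = v h i).card := by
    intro h _
    have := hcard_le h
    omega
  have hsum_ge : k * (n-1)
      ≤ ∑ h : Fin k, (n - (Finset.univ.filter fun i => S h.succ = v h i).card) := by
    calc k * (n-1) = ∑ _h : Fin k, (n-1) := by simp [mul_comm]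
    _ ≤ _ := Finset.sum_le_sum hge
  have hc0 : (∑ _i : Fin n, if S 0 = dollar then (0:ℕ) else 1) = 0 := by omega
  have hS0 : S 0 = dollar := by
    by_contra hne0
    rw [if_neg hne0] at hc0
    simp at hc0
    omega
  have hsum_eq : (∑ _h : Fin k, (n-1 : ℕ))
      = ∑ h : Fin k, (n - (Finset.univ.filter fun i => S h.succ = v h i).card) := by
    have h2 : (∑ _h : Fin k, (n-1 : ℕ)) = k * (n-1) := by simp [mul_comm]
    omega
  have key := (Finset.sum_eq_sum_iff_of_le hge).mp hsum_eq
  have hex : ∀ h : Fin k, ∃ i, S h.succ = v h i := by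
    intro h
    have hk1 := key h (Finset.mem_univ h)
    have := hcard_le h
    have hpos : 0 < (Finset.univ.filter fun i => S h.succ = v h i).card := by omega
    obtain ⟨i, hi⟩ := Finset.card_pos.mp hpos
    simp only [Finset.mem_filter, Finset.mem_univ, true_and] at hi
    exact ⟨i, hi⟩
  choose idx hidx using hex
  refine ⟨idx, funext fun q => ?_⟩
  induction q using Fin.cases with
  | zero => simpa [Scan] using hS0
  | succ h => simpa [Scan] using hidx h

end main

theorem stmt8 {k n m : ℕ} {α : Type*} [DecidableEq α]
    (hk : 2 ≤ k) (hn : 2 ≤ n) (hm : 1 ≤ m)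
    (dollar circ : α) (v : Fin k → Fin n → α)
    (hv : Function.Injective fun q : Fin k × Fin n => v q.1 q.2)
    (hvd : ∀ h i, v h i ≠ dollar) (hvc : ∀ h i, v h i ≠ circ) (hdc : dollar ≠ circ)
    -- the `m` edges: edge `j` joins `v (hs j) (js j)` and `v (ht j) (jt j)`
    (hs ht : Fin m → Fin k) (js jt : Fin m → Fin n)
    (hne : ∀ j, hs j ≠ ht j)
    (hdistinct : ∀ j j' : Fin m,
      ({(hs j, js j), (ht j, jt j)} : Set (Fin k × Fin n)) =
        {(hs j', js j'), (ht j', jt j')} → j = j') :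
    ((∃ (S : Fin (k+1) → α) (p : Fin m → Fin 2),
        (m * (k+2) + 1) * (∑ i, ham S (Vstr dollar v i)) +
          ∑ j, ham S (window (Estr dollar circ v (hs j) (ht j) (js j) (jt j)) (p j))
        ≤ (m * (k+2) + 1) * (n - 1) * k + m * k - k * (k - 1) / 2) ↔
      ∃ idx : Fin k → Fin n, ∀ h h' : Fin k, h ≠ h' →
        ∃ j : Fin m,
          (hs j = h ∧ js j = idx h ∧ ht j = h' ∧ jt j = idx h') ∨
          (hs j = h' ∧ js j = idx h' ∧ ht j = h ∧ jt j = idx h)) := by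
  have hmkN : m * k < m * (k+2) + 1 := by
    have : m * k ≤ m * (k+2) := Nat.mul_le_mul_left m (by omega)
    omega
  have hX : (m * (k+2) + 1) * (n-1) * k = (m * (k+2) + 1) * (k * (n-1)) := by ring
  have hpos : 0 < (m * (k+2) + 1) * (k * (n-1)) := by
    apply Nat.mul_pos (by omega) (Nat.mul_pos (by omega) (by omega))
  constructor
  · rintro ⟨S, p, hle⟩
    have hA : ∑ i, ham S (Vstr dollar v i) ≤ k * (n-1) := by
      by_contra hgt
      push_neg at hgt
      have h2 : (m * (k+2) + 1) * (k*(n-1) + 1)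
          ≤ (m * (k+2) + 1) * (∑ i, ham S (Vstr dollar v i)) :=
        Nat.mul_le_mul_left _ hgt
      have h3 : (m * (k+2) + 1) * (∑ i, ham S (Vstr dollar v i))
          ≤ (m * (k+2) + 1) * (n-1) * k + m * k - k*(k-1)/2 :=
        le_trans (Nat.le_add_right _ _) hle
      rw [Nat.mul_add, Nat.mul_one] at h2
      omega
    obtain ⟨idx, rfl⟩ := vertex_structure hv hn S hA
    refine ⟨idx, ?_⟩
    rw [sum_ham_Scan hv idx] at hle
    set Mset := Finset.univ.filter
      (fun j : Fin m => js j = idx (hs j) ∧ jt j = idx (ht j)) with hMset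
    have hpt : ∀ j ∈ (Finset.univ : Finset (Fin m)), k ≤
        ham (Scan dollar v idx)
          (window (Estr dollar circ v (hs j) (ht j) (js j) (jt j)) (p j))
        + (if js j = idx (hs j) ∧ jt j = idx (ht j) then 1 else 0) :=
      fun j _ => edge_lower hv hvd hvc hdc hk idx _ _ _ _ (hne j) (p j)
    have hsum : m * k ≤ (∑ j, ham (Scan dollar v idx)
        (window (Estr dollar circ v (hs j) (ht j) (js j) (jt j)) (p j))) + Mset.card := by
      have h1 : (∑ _j : Fin m, k)
          ≤ ∑ j, (ham (Scan dollar v idx)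
              (window (Estr dollar circ v (hs j) (ht j) (js j) (jt j)) (p j))
            + (if js j = idx (hs j) ∧ jt j = idx (ht j) then 1 else 0)) :=
        Finset.sum_le_sum hpt
      rw [Finset.sum_add_distrib] at h1
      rw [hMset, Finset.card_filter]
      have h2 : (∑ _j : Fin m, k) = m * k := by simp [mul_comm]
      omega
    set g : Fin m → Fin k × Fin k :=
      fun j => if hs j < ht j then (hs j, ht j) else (ht j, hs j) with hg
    set Pset := (Finset.univ : Finset (Fin k × Fin k)).filter (fun q => q.1 < q.2) with hP
    have hgmem : ∀ j ∈ Mset, g j ∈ Pset := by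
      intro j hj
      rw [hP, Finset.mem_filter]
      refine ⟨Finset.mem_univ _, ?_⟩
      by_cases hlt : hs j < ht j
      · simp [hg, hlt]
      · have hlt2 : ht j < hs j := lt_of_le_of_ne (not_lt.mp hlt) (hne j).symm
        simp [hg, hlt, hlt2]
    have hginj : Set.InjOn g Mset := by
      intro j hj j' hj' hgj
      simp only [hMset, Finset.coe_filter, Set.mem_setOf_eq, Finset.mem_univ,
        true_and] at hj hj'
      apply hdistinct j j'
      by_cases h1 : hs j < ht j <;> by_cases h2 : hs j' < ht j' <;>
        simp only [hg, h1, h2, if_true, if_false, Prod.mk.injEq] at hgj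
      · rw [hj.1, hj.2, hj'.1, hj'.2, hgj.1, hgj.2]
      · rw [hj.1, hj.2, hj'.1, hj'.2, hgj.1, hgj.2]
        exact Set.pair_comm _ _
      · rw [hj.1, hj.2, hj'.1, hj'.2, hgj.1, hgj.2]
        exact Set.pair_comm _ _
      · rw [hj.1, hj.2, hj'.1, hj'.2, hgj.1, hgj.2]
    have hcard : Pset.card ≤ Mset.card := by
      have hMm : Mset.card ≤ m :=
        le_trans (Finset.card_filter_le _ _) (by simp)
      have hPc : Pset.card = k*(k-1)/2 := by rw [hP]; exact Pset_card k
      have hmmk : m ≤ m * k := Nat.le_mul_of_pos_right m (by omega)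
      omega
    have himg : Mset.image g = Pset :=
      Finset.eq_of_subset_of_card_le
        (fun x hx => by
          obtain ⟨j, hj, rfl⟩ := Finset.mem_image.mp hx
          exact hgmem j hj)
        (by rw [Finset.card_image_of_injOn hginj]; exact hcard)
    intro h h' hhne
    rcases lt_or_gt_of_ne hhne with hlt | hlt
    · have hmem : (h, h') ∈ Mset.image g := by rw [himg, hP]; simp [hlt]
      obtain ⟨j, hj, hgj⟩ := Finset.mem_image.mp hmem
      have hj12 : js j = idx (hs j) ∧ jt j = idx (ht j) :=
        ((Finset.mem_filter.mp hj)).2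
      refine ⟨j, ?_⟩
      by_cases hlt2 : hs j < ht j
      · simp only [hg, hlt2, if_true, Prod.mk.injEq] at hgj
        exact Or.inl ⟨hgj.1, by rw [hj12.1, hgj.1], hgj.2, by rw [hj12.2, hgj.2]⟩
      · simp only [hg, hlt2, if_false, Prod.mk.injEq] at hgj
        exact Or.inr ⟨hgj.2, by rw [hj12.1, hgj.2], hgj.1, by rw [hj12.2, hgj.1]⟩
    · have hmem : (h', h) ∈ Mset.image g := by rw [himg, hP]; simp [hlt]
      obtain ⟨j, hj, hgj⟩ := Finset.mem_image.mp hmem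
      have hj12 : js j = idx (hs j) ∧ jt j = idx (ht j) :=
        ((Finset.mem_filter.mp hj)).2
      refine ⟨j, ?_⟩
      by_cases hlt2 : hs j < ht j
      · simp only [hg, hlt2, if_true, Prod.mk.injEq] at hgj
        exact Or.inr ⟨hgj.1, by rw [hj12.1, hgj.1], hgj.2, by rw [hj12.2, hgj.2]⟩
      · simp only [hg, hlt2, if_false, Prod.mk.injEq] at hgj
        exact Or.inl ⟨hgj.2, by rw [hj12.1, hgj.2], hgj.1, by rw [hj12.2, hgj.1]⟩
  · rintro ⟨idx, hcl⟩
    refine ⟨Scan dollar v idx,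
      fun j => if js j = idx (hs j) ∧ jt j = idx (ht j) then 1 else 0, ?_⟩
    rw [sum_ham_Scan hv idx]
    set Mset := Finset.univ.filter
      (fun j : Fin m => js j = idx (hs j) ∧ jt j = idx (ht j)) with hMset
    set g : Fin m → Fin k × Fin k :=
      fun j => if hs j < ht j then (hs j, ht j) else (ht j, hs j) with hg
    set Pset := (Finset.univ : Finset (Fin k × Fin k)).filter (fun q => q.1 < q.2) with hP
    have hPsub : Pset ⊆ Mset.image g := by
      rintro ⟨h, h'⟩ hq
      rw [hP, Finset.mem_filter] at hq
      have hlt : h < h' := hq.2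
      obtain ⟨j, hj⟩ := hcl h h' (ne_of_lt hlt)
      apply Finset.mem_image.mpr
      refine ⟨j, ?_, ?_⟩
      · rw [hMset, Finset.mem_filter]
        rcases hj with ⟨e1, e2, e3, e4⟩ | ⟨e1, e2, e3, e4⟩ <;>
          exact ⟨Finset.mem_univ _, by rw [e2, e1], by rw [e4, e3]⟩
      · rcases hj with ⟨e1, e2, e3, e4⟩ | ⟨e1, e2, e3, e4⟩
        · simp [hg, e1, e3, hlt]
        · simp [hg, e1, e3, hlt.asymm]
    have hC : k*(k-1)/2 ≤ Mset.card := by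
      have h1 := Finset.card_le_card hPsub
      have h2 := Finset.card_image_le (f := g) (s := Mset)
      have hPc : Pset.card = k*(k-1)/2 := by rw [hP]; exact Pset_card k
      omega
    have hedge : ∀ j ∈ (Finset.univ : Finset (Fin m)),
        ham (Scan dollar v idx)
          (window (Estr dollar circ v (hs j) (ht j) (js j) (jt j))
            (if js j = idx (hs j) ∧ jt j = idx (ht j) then 1 else 0))
        + (if js j = idx (hs j) ∧ jt j = idx (ht j) then 1 else 0) ≤ k := by
      intro j _
      by_cases hj : js j = idx (hs j) ∧ jt j = idx (ht j)
      · rw [if_pos hj, if_pos hj]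
        exact edge_upper_matching hv hvc hdc hk idx _ _ _ _ (hne j) hj
      · rw [if_neg hj, if_neg hj, ham_edge_p0 hv hvd hvc idx]
        omega
    have hsum : (∑ j, ham (Scan dollar v idx)
        (window (Estr dollar circ v (hs j) (ht j) (js j) (jt j))
          (if js j = idx (hs j) ∧ jt j = idx (ht j) then 1 else 0))) + Mset.card
        ≤ m * k := by
      have h1 : ∑ j, (ham (Scan dollar v idx)
            (window (Estr dollar circ v (hs j) (ht j) (js j) (jt j))
              (if js j = idx (hs j) ∧ jt j = idx (ht j) then 1 else 0))
          + (if js j = idx (hs j) ∧ jt j = idx (ht j) then 1 else 0))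
          ≤ ∑ _j : Fin m, k := Finset.sum_le_sum hedge
      rw [Finset.sum_add_distrib] at h1
      rw [hMset, Finset.card_filter]
      have h2 : (∑ _j : Fin m, k) = m * k := by simp [mul_comm]
      omega
    have hMm : Mset.card ≤ m :=
      le_trans (Finset.card_filter_le _ _) (by simp)
    beta_reduce
    rw [hX]
    omega
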